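/- The form P_{3,3,6}(x,y) = x₁²y₁² + x₂²y₂² + x₃²y₃² + x₁²y₂² + x₂²y₃² + x₃²y₁² cannot be written as a sum of 5 or fewer squares of bilinear forms; its SOS rank is exactly 6. -/

import Mathlib

/-- `c` gives an SOS decomposition of the biquadratic form `P` into `R` squares
of bilinear forms. -/
def IsSOSDecomp (m n R : ℕ) (P : (Fin m → ℝ) → (Fin n → ℝ) → ℝ)
    (c : Fin R → Fin m → Fin n → ℝ) : Prop :=
  ∀ x y, P x y = ∑ t, (∑ i, ∑ j, c t i j * x i * y j)^2

/-- The SOS rank: the minimal number of squares of bilinear forms summing to `P`. -/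
noncomputable def sosRank (m n : ℕ) (P : (Fin m → ℝ) → (Fin n → ℝ) → ℝ) : ℕ :=
  sInf {R | ∃ c : Fin R → Fin m → Fin n → ℝ, IsSOSDecomp m n R P c}

/-- The cyclic six-term simple form `P_{3,3,6}`. -/
def P336 : (Fin 3 → ℝ) → (Fin 3 → ℝ) → ℝ :=
  fun x y => (x 0)^2*(y 0)^2 + (x 1)^2*(y 1)^2 + (x 2)^2*(y 2)^2
    + (x 0)^2*(y 1)^2 + (x 1)^2*(y 2)^2 + (x 2)^2*(y 0)^2

lemma sum_mul_comm' {R : ℕ} (f g : Fin R → ℝ) :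
    ∑ t, f t * g t = ∑ t, g t * f t :=
  Finset.sum_congr rfl fun t _ => mul_comm _ _

lemma expand2 {R : ℕ} (f g : Fin R → ℝ) :
    ∑ t, (f t + g t)^2
      = (∑ t, (f t)^2) + (∑ t, (g t)^2) + 2*(∑ t, f t * g t) := by
  rw [Finset.mul_sum, ← Finset.sum_add_distrib, ← Finset.sum_add_distrib]
  exact Finset.sum_congr rfl fun t _ => by ring

lemma expand3 {R : ℕ} (f g h : Fin R → ℝ) :
    ∑ t, (f t + g t + h t)^2
      = (∑ t, (f t)^2) + (∑ t, (g t)^2) + (∑ t, (h t)^2)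
        + 2*(∑ t, f t * g t) + 2*(∑ t, f t * h t) + 2*(∑ t, g t * h t) := by
  rw [Finset.mul_sum, Finset.mul_sum, Finset.mul_sum, ← Finset.sum_add_distrib,
    ← Finset.sum_add_distrib, ← Finset.sum_add_distrib, ← Finset.sum_add_distrib,
    ← Finset.sum_add_distrib]
  exact Finset.sum_congr rfl fun t _ => by ring


open Matrix in
lemma gram_rank {R : ℕ} (v : Fin R → Fin 6 → ℝ)
    (hG : ∀ s s' : Fin 6, ∑ t, v t s * v t s' = if s = s' then 1 else 0) :
    6 ≤ R := by
  set M : Matrix (Fin 6) (Fin R) ℝ := Matrix.of fun s t => v t s with hMdef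
  have hM : M * Mᵀ = 1 := by
    ext s s'
    rw [Matrix.mul_apply]
    simp only [hMdef, Matrix.transpose_apply, Matrix.of_apply, hG s s', Matrix.one_apply]
  calc (6:ℕ) = (1 : Matrix (Fin 6) (Fin 6) ℝ).rank := by rw [Matrix.rank_one]; simp
    _ = (M * Mᵀ).rank := by rw [hM]
    _ ≤ M.rank := Matrix.rank_mul_le_left M Mᵀ
    _ ≤ Fintype.card (Fin R) := M.rank_le_card_width
    _ = R := by simp


set_option maxHeartbeats 1000000 in
lemma mk_gram {R : ℕ} (c : Fin R → Fin 3 → Fin 3 → ℝ)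
    (Q00 : ∑ t, c t 0 0 * c t 0 0 = 1)
    (Q11 : ∑ t, c t 1 1 * c t 1 1 = 1)
    (Q22 : ∑ t, c t 2 2 * c t 2 2 = 1)
    (Q01 : ∑ t, c t 0 1 * c t 0 1 = 1)
    (Q12 : ∑ t, c t 1 2 * c t 1 2 = 1)
    (Q20 : ∑ t, c t 2 0 * c t 2 0 = 1)
    (E1 : ∑ t, c t 0 0 * c t 0 1 = 0)
    (E1r : ∑ t, c t 0 1 * c t 0 0 = 0)
    (E2 : ∑ t, c t 1 1 * c t 1 2 = 0)
    (E2r : ∑ t, c t 1 2 * c t 1 1 = 0)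
    (E3 : ∑ t, c t 2 0 * c t 2 2 = 0)
    (E3r : ∑ t, c t 2 2 * c t 2 0 = 0)
    (E4 : ∑ t, c t 0 0 * c t 2 0 = 0)
    (E4r : ∑ t, c t 2 0 * c t 0 0 = 0)
    (E5 : ∑ t, c t 0 1 * c t 1 1 = 0)
    (E5r : ∑ t, c t 1 1 * c t 0 1 = 0)
    (E6 : ∑ t, c t 1 2 * c t 2 2 = 0)
    (E6r : ∑ t, c t 2 2 * c t 1 2 = 0)
    (E7 : ∑ t, c t 0 0 * c t 1 2 = 0)
    (E7r : ∑ t, c t 1 2 * c t 0 0 = 0)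
    (E8 : ∑ t, c t 0 1 * c t 2 2 = 0)
    (E8r : ∑ t, c t 2 2 * c t 0 1 = 0)
    (E9 : ∑ t, c t 1 1 * c t 2 0 = 0)
    (E9r : ∑ t, c t 2 0 * c t 1 1 = 0)
    (E10 : ∑ t, c t 0 0 * c t 1 1 = 0)
    (E10r : ∑ t, c t 1 1 * c t 0 0 = 0)
    (E11 : ∑ t, c t 0 0 * c t 2 2 = 0)
    (E11r : ∑ t, c t 2 2 * c t 0 0 = 0)
    (E12 : ∑ t, c t 1 1 * c t 2 2 = 0)
    (E12r : ∑ t, c t 2 2 * c t 1 1 = 0)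
    (E13 : ∑ t, c t 0 1 * c t 1 2 = 0)
    (E13r : ∑ t, c t 1 2 * c t 0 1 = 0)
    (E14 : ∑ t, c t 0 1 * c t 2 0 = 0)
    (E14r : ∑ t, c t 2 0 * c t 0 1 = 0)
    (E15 : ∑ t, c t 1 2 * c t 2 0 = 0)
    (E15r : ∑ t, c t 2 0 * c t 1 2 = 0) :
    ∀ s s' : Fin 6, ∑ t, (fun t s =>
      if s = 0 then c t 0 0 else if s = 1 then c t 1 1 else if s = 2 then c t 2 2
      else if s = 3 then c t 0 1 else if s = 4 then c t 1 2 else c t 2 0) t s *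
      (fun t s =>
      if s = 0 then c t 0 0 else if s = 1 then c t 1 1 else if s = 2 then c t 2 2
      else if s = 3 then c t 0 1 else if s = 4 then c t 1 2 else c t 2 0) t s'
      = if s = s' then 1 else 0 := by
  intro s s'
  fin_cases s <;> fin_cases s' <;> simp (config := { decide := true }) <;>
    linarith [Q00, Q11, Q22, Q01, Q12, Q20, E1, E2, E3, E4, E5, E6, E7, E8, E9, E10, E11, E12, E13, E14, E15, E1r, E2r, E3r, E4r, E5r, E6r, E7r, E8r, E9r, E10r, E11r, E12r, E13r, E14r, E15r]

lemma lower336 (R : ℕ) (c : Fin R → Fin 3 → Fin 3 → ℝ)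
    (h : IsSOSDecomp 3 3 R P336 c) : 6 ≤ R := by
  -- forbidden coefficients vanish
  have hz : ∀ (x y : Fin 3 → ℝ) (i j : Fin 3), P336 x y = 0 →
      (∀ t : Fin R, (∑ i', ∑ j', c t i' j' * x i' * y j') = c t i j) →
      ∀ t, c t i j = 0 := by
    intro x y i j hP hl t
    have h' := h x y
    rw [hP] at h'
    have h'' := (Finset.sum_eq_zero_iff_of_nonneg
      (fun t _ => sq_nonneg (∑ i', ∑ j', c t i' j' * x i' * y j'))).mp h'.symm
      t (Finset.mem_univ t)
    have := (pow_eq_zero_iff two_ne_zero).mp h''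
    rwa [hl t] at this
  have z02 : ∀ t, c t 0 2 = 0 := by
    refine hz ![1,0,0] ![0,0,1] 0 2 (by norm_num [P336, Matrix.cons_val_two]) (fun t => ?_)
    simp [Fin.sum_univ_three]
  have z10 : ∀ t, c t 1 0 = 0 := by
    refine hz ![0,1,0] ![1,0,0] 1 0 (by norm_num [P336, Matrix.cons_val_two]) (fun t => ?_)
    simp [Fin.sum_univ_three]
  have z21 : ∀ t, c t 2 1 = 0 := by
    refine hz ![0,0,1] ![0,1,0] 2 1 (by norm_num [P336, Matrix.cons_val_two]) (fun t => ?_)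
    simp [Fin.sum_univ_three]
  -- diagonal Gram entries
  have d00 : (1:ℝ) = ∑ t, (c t 0 0)^2 := by
    have h' := h ![1,0,0] ![1,0,0]; norm_num [P336, Fin.sum_univ_three, Matrix.cons_val_two] at h'; exact h'
  have d11 : (1:ℝ) = ∑ t, (c t 1 1)^2 := by
    have h' := h ![0,1,0] ![0,1,0]; norm_num [P336, Fin.sum_univ_three, Matrix.cons_val_two] at h'; exact h'
  have d22 : (1:ℝ) = ∑ t, (c t 2 2)^2 := by
    have h' := h ![0,0,1] ![0,0,1]; norm_num [P336, Fin.sum_univ_three, Matrix.cons_val_two] at h'; exact h'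
  have d01 : (1:ℝ) = ∑ t, (c t 0 1)^2 := by
    have h' := h ![1,0,0] ![0,1,0]; norm_num [P336, Fin.sum_univ_three, Matrix.cons_val_two] at h'; exact h'
  have d12 : (1:ℝ) = ∑ t, (c t 1 2)^2 := by
    have h' := h ![0,1,0] ![0,0,1]; norm_num [P336, Fin.sum_univ_three, Matrix.cons_val_two] at h'; exact h'
  have d20 : (1:ℝ) = ∑ t, (c t 2 0)^2 := by
    have h' := h ![0,0,1] ![1,0,0]; norm_num [P336, Fin.sum_univ_three, Matrix.cons_val_two] at h'; exact h'
  have A1 : ∑ t, (c t 0 0 + c t 0 1)^2 = 2 := by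
    have h' := h ![1,0,0] ![1,1,0]
    norm_num [P336, Fin.sum_univ_three, Matrix.cons_val_two] at h'
    rw [h']
  have A2 : ∑ t, (c t 1 1 + c t 1 2)^2 = 2 := by
    have h' := h ![0,1,0] ![0,1,1]
    norm_num [P336, Fin.sum_univ_three, Matrix.cons_val_two] at h'
    rw [h']
  have A3 : ∑ t, (c t 2 0 + c t 2 2)^2 = 2 := by
    have h' := h ![0,0,1] ![1,0,1]
    norm_num [P336, Fin.sum_univ_three, Matrix.cons_val_two] at h'
    rw [h']
  have A4 : ∑ t, (c t 0 0 + c t 2 0)^2 = 2 := by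
    have h' := h ![1,0,1] ![1,0,0]
    norm_num [P336, Fin.sum_univ_three, Matrix.cons_val_two] at h'
    rw [h']
  have A5 : ∑ t, (c t 0 1 + c t 1 1)^2 = 2 := by
    have h' := h ![1,1,0] ![0,1,0]
    norm_num [P336, Fin.sum_univ_three, Matrix.cons_val_two] at h'
    rw [h']
  have A6 : ∑ t, (c t 1 2 + c t 2 2)^2 = 2 := by
    have h' := h ![0,1,1] ![0,0,1]
    norm_num [P336, Fin.sum_univ_three, Matrix.cons_val_two] at h'
    rw [h']
  have A7 : ∑ t, (c t 0 0 + c t 1 2)^2 = 2 := by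
    have h' := h ![1,1,0] ![1,0,1]
    norm_num [P336, Fin.sum_univ_three, Matrix.cons_val_two] at h'
    rw [h']
    exact Finset.sum_congr rfl fun t _ => by rw [z02 t]; rw [z10 t]; ring
  have A8 : ∑ t, (c t 0 1 + c t 2 2)^2 = 2 := by
    have h' := h ![1,0,1] ![0,1,1]
    norm_num [P336, Fin.sum_univ_three, Matrix.cons_val_two] at h'
    rw [h']
    exact Finset.sum_congr rfl fun t _ => by rw [z02 t]; rw [z21 t]; ring
  have A9 : ∑ t, (c t 1 1 + c t 2 0)^2 = 2 := by
    have h' := h ![0,1,1] ![1,1,0]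
    norm_num [P336, Fin.sum_univ_three, Matrix.cons_val_two] at h'
    rw [h']
    exact Finset.sum_congr rfl fun t _ => by rw [z10 t]; rw [z21 t]; ring
  have A10 : ∑ t, (c t 0 0 + c t 0 1 + c t 1 1)^2 = 3 := by
    have h' := h ![1,1,0] ![1,1,0]
    norm_num [P336, Fin.sum_univ_three, Matrix.cons_val_two] at h'
    rw [h']
    exact Finset.sum_congr rfl fun t _ => by rw [z10 t]; ring
  have A11 : ∑ t, (c t 0 0 + c t 2 0 + c t 2 2)^2 = 3 := by
    have h' := h ![1,0,1] ![1,0,1]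
    norm_num [P336, Fin.sum_univ_three, Matrix.cons_val_two] at h'
    rw [h']
    exact Finset.sum_congr rfl fun t _ => by rw [z02 t]; ring
  have A12 : ∑ t, (c t 1 1 + c t 1 2 + c t 2 2)^2 = 3 := by
    have h' := h ![0,1,1] ![0,1,1]
    norm_num [P336, Fin.sum_univ_three, Matrix.cons_val_two] at h'
    rw [h']
    exact Finset.sum_congr rfl fun t _ => by rw [z21 t]; ring
  have A13 : ∑ t, (c t 0 1 + c t 1 1 + c t 1 2)^2 = 3 := by
    have h' := h ![1,1,0] ![0,1,1]
    norm_num [P336, Fin.sum_univ_three, Matrix.cons_val_two] at h'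
    rw [h']
    exact Finset.sum_congr rfl fun t _ => by rw [z02 t]; ring
  have A14 : ∑ t, (c t 0 0 + c t 0 1 + c t 2 0)^2 = 3 := by
    have h' := h ![1,0,1] ![1,1,0]
    norm_num [P336, Fin.sum_univ_three, Matrix.cons_val_two] at h'
    rw [h']
    exact Finset.sum_congr rfl fun t _ => by rw [z21 t]; ring
  have A15 : ∑ t, (c t 1 2 + c t 2 0 + c t 2 2)^2 = 3 := by
    have h' := h ![0,1,1] ![1,0,1]
    norm_num [P336, Fin.sum_univ_three, Matrix.cons_val_two] at h'
    rw [h']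
    exact Finset.sum_congr rfl fun t _ => by rw [z10 t]; ring
  have E1 : ∑ t, c t 0 0 * c t 0 1 = 0 := by
    rw [expand2] at A1; linarith [d00, d01]
  have E2 : ∑ t, c t 1 1 * c t 1 2 = 0 := by
    rw [expand2] at A2; linarith [d11, d12]
  have E3 : ∑ t, c t 2 0 * c t 2 2 = 0 := by
    rw [expand2] at A3; linarith [d20, d22]
  have E4 : ∑ t, c t 0 0 * c t 2 0 = 0 := by
    rw [expand2] at A4; linarith [d00, d20]
  have E5 : ∑ t, c t 0 1 * c t 1 1 = 0 := by
    rw [expand2] at A5; linarith [d01, d11]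
  have E6 : ∑ t, c t 1 2 * c t 2 2 = 0 := by
    rw [expand2] at A6; linarith [d12, d22]
  have E7 : ∑ t, c t 0 0 * c t 1 2 = 0 := by
    rw [expand2] at A7; linarith [d00, d12]
  have E8 : ∑ t, c t 0 1 * c t 2 2 = 0 := by
    rw [expand2] at A8; linarith [d01, d22]
  have E9 : ∑ t, c t 1 1 * c t 2 0 = 0 := by
    rw [expand2] at A9; linarith [d11, d20]
  have E10 : ∑ t, c t 0 0 * c t 1 1 = 0 := by
    rw [expand3] at A10; linarith [d00, d01, d11, E1, E5]
  have E11 : ∑ t, c t 0 0 * c t 2 2 = 0 := by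
    rw [expand3] at A11; linarith [d00, d20, d22, E4, E3]
  have E12 : ∑ t, c t 1 1 * c t 2 2 = 0 := by
    rw [expand3] at A12; linarith [d11, d12, d22, E2, E6]
  have E13 : ∑ t, c t 0 1 * c t 1 2 = 0 := by
    rw [expand3] at A13; linarith [d01, d11, d12, E5, E2]
  have E14 : ∑ t, c t 0 1 * c t 2 0 = 0 := by
    rw [expand3] at A14; linarith [d00, d01, d20, E1, E4]
  have E15 : ∑ t, c t 1 2 * c t 2 0 = 0 := by
    rw [expand3] at A15; linarith [d12, d20, d22, E6, E3]
  have E1r : ∑ t, c t 0 1 * c t 0 0 = 0 := by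
    rw [sum_mul_comm']; exact E1
  have E2r : ∑ t, c t 1 2 * c t 1 1 = 0 := by
    rw [sum_mul_comm']; exact E2
  have E3r : ∑ t, c t 2 2 * c t 2 0 = 0 := by
    rw [sum_mul_comm']; exact E3
  have E4r : ∑ t, c t 2 0 * c t 0 0 = 0 := by
    rw [sum_mul_comm']; exact E4
  have E5r : ∑ t, c t 1 1 * c t 0 1 = 0 := by
    rw [sum_mul_comm']; exact E5
  have E6r : ∑ t, c t 2 2 * c t 1 2 = 0 := by
    rw [sum_mul_comm']; exact E6
  have E7r : ∑ t, c t 1 2 * c t 0 0 = 0 := by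
    rw [sum_mul_comm']; exact E7
  have E8r : ∑ t, c t 2 2 * c t 0 1 = 0 := by
    rw [sum_mul_comm']; exact E8
  have E9r : ∑ t, c t 2 0 * c t 1 1 = 0 := by
    rw [sum_mul_comm']; exact E9
  have E10r : ∑ t, c t 1 1 * c t 0 0 = 0 := by
    rw [sum_mul_comm']; exact E10
  have E11r : ∑ t, c t 2 2 * c t 0 0 = 0 := by
    rw [sum_mul_comm']; exact E11
  have E12r : ∑ t, c t 2 2 * c t 1 1 = 0 := by
    rw [sum_mul_comm']; exact E12
  have E13r : ∑ t, c t 1 2 * c t 0 1 = 0 := by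
    rw [sum_mul_comm']; exact E13
  have E14r : ∑ t, c t 2 0 * c t 0 1 = 0 := by
    rw [sum_mul_comm']; exact E14
  have E15r : ∑ t, c t 2 0 * c t 1 2 = 0 := by
    rw [sum_mul_comm']; exact E15
  have Q00 : ∑ t, c t 0 0 * c t 0 0 = 1 := by
    simpa [pow_two] using d00.symm
  have Q11 : ∑ t, c t 1 1 * c t 1 1 = 1 := by
    simpa [pow_two] using d11.symm
  have Q22 : ∑ t, c t 2 2 * c t 2 2 = 1 := by
    simpa [pow_two] using d22.symm
  have Q01 : ∑ t, c t 0 1 * c t 0 1 = 1 := by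
    simpa [pow_two] using d01.symm
  have Q12 : ∑ t, c t 1 2 * c t 1 2 = 1 := by
    simpa [pow_two] using d12.symm
  have Q20 : ∑ t, c t 2 0 * c t 2 0 = 1 := by
    simpa [pow_two] using d20.symm
  exact gram_rank _ (mk_gram c Q00 Q11 Q22 Q01 Q12 Q20 E1 E1r E2 E2r E3 E3r E4 E4r E5 E5r E6 E6r E7 E7r E8 E8r E9 E9r E10 E10r E11 E11r E12 E12r E13 E13r E14 E14r E15 E15r)

def P336c : Fin 6 → Fin 3 → Fin 3 → ℝ
  | 0 => ![![1,0,0],![0,0,0],![0,0,0]]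
  | 1 => ![![0,0,0],![0,1,0],![0,0,0]]
  | 2 => ![![0,0,0],![0,0,0],![0,0,1]]
  | 3 => ![![0,1,0],![0,0,0],![0,0,0]]
  | 4 => ![![0,0,0],![0,0,1],![0,0,0]]
  | 5 => ![![0,0,0],![0,0,0],![1,0,0]]

lemma P336c_isSOS : IsSOSDecomp 3 3 6 P336 P336c := by
  intro x y
  simp [P336, P336c, Fin.sum_univ_three, Fin.sum_univ_six, Matrix.vecHead, Matrix.vecTail]
  ring


/-- `P_{3,3,6}` cannot be written as a sum of 5 or fewer squares of
bilinear forms; its SOS rank is exactly 6. -/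
theorem P336_sosRank_eq_six :
    (∀ (R : ℕ) (c : Fin R → Fin 3 → Fin 3 → ℝ),
        IsSOSDecomp 3 3 R P336 c → 6 ≤ R) ∧
    sosRank 3 3 P336 = 6 := by
  have mem6 : 6 ∈ {R | ∃ c : Fin R → Fin 3 → Fin 3 → ℝ, IsSOSDecomp 3 3 R P336 c} :=
    ⟨P336c, P336c_isSOS⟩
  refine ⟨lower336, le_antisymm (Nat.sInf_le mem6) (le_csInf ⟨6, mem6⟩ ?_)⟩
  rintro R ⟨c, hc⟩
  exact lower336 R c hc
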